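/- Let Ṽ be the normalised Arctic lemming operator. For every initial point s = (x₁⁽⁰⁾,x₂⁽⁰⁾,x₃⁽⁰⁾,u⁽⁰⁾) ∈ S^{3,1}, the sequence Ṽ^k(s) converges as k → ∞, with limit (1/2, 0, 0, 1/2) if x₂⁽⁰⁾ = x₃⁽⁰⁾ = 0, and limit (7/20, 7/60, 7/60, 5/12) otherwise. -/

import Mathlib

/-- The normalised Arctic lemming gonosomal operator. -/
noncomputable def nArcticOp (p : ℝ × ℝ × ℝ × ℝ) : ℝ × ℝ × ℝ × ℝ :=
  ((6 * p.1 + 3 * p.2.1) / (12 * (p.1 + p.2.1 + p.2.2.1)),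
   (3 * p.2.1 + 4 * p.2.2.1) / (12 * (p.1 + p.2.1 + p.2.2.1)),
   (3 * p.2.1 + 4 * p.2.2.1) / (12 * (p.1 + p.2.1 + p.2.2.1)),
   (6 * p.1 + 3 * p.2.1 + 4 * p.2.2.1) / (12 * (p.1 + p.2.1 + p.2.2.1)))

/-- The set `S^{3,1}` of frequency distributions. -/
def S31 : Set (ℝ × ℝ × ℝ × ℝ) :=
  {p | 0 ≤ p.1 ∧ 0 ≤ p.2.1 ∧ 0 ≤ p.2.2.1 ∧ 0 ≤ p.2.2.2 ∧
       0 < p.1 + p.2.1 + p.2.2.1 ∧ 0 < p.2.2.2 ∧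
       p.1 + p.2.1 + p.2.2.1 + p.2.2.2 = 1}

/-- Parametrisation of points with `x₂ = x₃` by the ratio `r = x₁/x₂`. -/
noncomputable def arcF (r : ℝ) : ℝ × ℝ × ℝ × ℝ :=
  ((6*r+3)/(12*(r+2)), 7/(12*(r+2)), 7/(12*(r+2)), (6*r+7)/(12*(r+2)))

lemma arc_opA (x y u : ℝ) (hx : 0 ≤ x) (hy : 0 < y) :
    nArcticOp (x, y, y, u) = arcF (x / y) := by
  have hy' : y ≠ 0 := hy.ne'
  have hα : x + y + y ≠ 0 := by positivity
  have h2 : x / y + 2 ≠ 0 := by positivity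
  simp only [nArcticOp, arcF, Prod.mk.injEq]
  refine ⟨?_, ?_, ?_, ?_⟩ <;> · field_simp; ring_nf; try exact Or.inl trivial

lemma arc_opB (r : ℝ) (hr : 0 ≤ r) : nArcticOp (arcF r) = arcF ((6*r+3)/7) := by
  have h2 : (0:ℝ) < r + 2 := by linarith
  have hx : 0 ≤ (6*r+3)/(12*(r+2)) := by positivity
  have hy : 0 < 7/(12*(r+2)) := by positivity
  have h := arc_opA ((6*r+3)/(12*(r+2))) (7/(12*(r+2))) ((6*r+7)/(12*(r+2))) hx hy
  have hdiv : (6*r+3)/(12*(r+2)) / (7/(12*(r+2))) = (6*r+3)/7 := by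
    field_simp
  rw [show nArcticOp (arcF r) = nArcticOp ((6*r+3)/(12*(r+2)), 7/(12*(r+2)),
      7/(12*(r+2)), (6*r+7)/(12*(r+2))) from rfl, h, hdiv]

lemma arc_iter (k : ℕ) : ∀ r : ℝ, 0 ≤ r →
    nArcticOp^[k] (arcF r) = arcF (3 + (6/7)^k * (r - 3)) := by
  induction k with
  | zero => intro r _; simp
  | succ n ih =>
    intro r hr
    have hr' : (0:ℝ) ≤ (6*r+3)/7 := by positivity
    rw [Function.iterate_succ_apply, arc_opB r hr, ih _ hr']
    congr 1
    ring

lemma arcF_cont : ContinuousAt arcF 3 := by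
  have hne : (12*((3:ℝ)+2)) ≠ 0 := by norm_num
  unfold arcF
  exact (((continuousAt_const.mul continuousAt_id).add continuousAt_const).div
      (continuousAt_const.mul (continuousAt_id.add continuousAt_const)) hne).prodMk
    ((continuousAt_const.div
      (continuousAt_const.mul (continuousAt_id.add continuousAt_const)) hne).prodMk
    ((continuousAt_const.div
      (continuousAt_const.mul (continuousAt_id.add continuousAt_const)) hne).prodMk
    (((continuousAt_const.mul continuousAt_id).add continuousAt_const).div
      (continuousAt_const.mul (continuousAt_id.add continuousAt_const)) hne)))

lemma arc_tendsto (r : ℝ) :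
    Filter.Tendsto (fun k : ℕ => (3:ℝ) + (6/7)^k * (r - 3)) Filter.atTop (nhds 3) := by
  have h : Filter.Tendsto (fun k : ℕ => ((6:ℝ)/7)^k) Filter.atTop (nhds 0) :=
    tendsto_pow_atTop_nhds_zero_of_lt_one (by norm_num) (by norm_num)
  have := (h.mul_const (r - 3)).const_add 3
  simpa using this

theorem nArcticOp_limit (s : ℝ × ℝ × ℝ × ℝ) (hs : s ∈ S31) :
    (s.2.1 = 0 ∧ s.2.2.1 = 0 →
      Filter.Tendsto (fun k => nArcticOp^[k] s) Filter.atTop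
        (nhds ((1 : ℝ) / 2, (0 : ℝ), (0 : ℝ), (1 : ℝ) / 2))) ∧
    (¬(s.2.1 = 0 ∧ s.2.2.1 = 0) →
      Filter.Tendsto (fun k => nArcticOp^[k] s) Filter.atTop
        (nhds ((7 : ℝ) / 20, (7 : ℝ) / 60, (7 : ℝ) / 60, (5 : ℝ) / 12))) := by
  obtain ⟨x1, x2, x3, u⟩ := s
  obtain ⟨hx1, hx2, hx3, hu, hα, hu', hsum⟩ := hs
  simp only at hx1 hx2 hx3 hu hα hu' hsum ⊢
  constructor
  · rintro ⟨h2, h3⟩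
    subst h2; subst h3
    have hx1' : x1 ≠ 0 := by intro h; rw [h] at hα; simp at hα
    have hstep : nArcticOp (x1, 0, 0, u) = ((1:ℝ)/2, 0, 0, 1/2) := by
      simp only [nArcticOp, Prod.mk.injEq]
      have hx1p : 0 < x1 := by linarith
      norm_num
      field_simp
      ring
    have hfix : nArcticOp ((1:ℝ)/2, 0, 0, 1/2) = ((1:ℝ)/2, 0, 0, 1/2) := by
      simp only [nArcticOp, Prod.mk.injEq]
      norm_num
    have hconst : ∀ k, nArcticOp^[k + 1] (x1, 0, 0, u) = ((1:ℝ)/2, 0, 0, 1/2) := by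
      intro k
      rw [Function.iterate_succ_apply, hstep, Function.iterate_fixed hfix]
    refine (Filter.tendsto_add_atTop_iff_nat 1).mp ?_
    simp only [hconst]
    exact tendsto_const_nhds
  · intro h
    have hy : 0 < 3 * x2 + 4 * x3 := by
      rcases eq_or_lt_of_le hx2 with h2 | h2
      · rcases eq_or_lt_of_le hx3 with h3 | h3
        · exact absurd ⟨h2.symm, h3.symm⟩ h
        · linarith
      · linarith
    set a : ℝ := (6 * x1 + 3 * x2) / (12 * (x1 + x2 + x3)) with ha_def
    set b : ℝ := (3 * x2 + 4 * x3) / (12 * (x1 + x2 + x3)) with hb_def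
    have ha : 0 ≤ a := by apply div_nonneg <;> linarith
    have hb : 0 < b := by apply div_pos <;> linarith
    have hr : 0 ≤ a / b := div_nonneg ha hb.le
    have hstep1 : nArcticOp (x1, x2, x3, u) =
        (a, b, b, (6 * x1 + 3 * x2 + 4 * x3) / (12 * (x1 + x2 + x3))) := rfl
    have hstep2 : nArcticOp (a, b, b, (6 * x1 + 3 * x2 + 4 * x3) / (12 * (x1 + x2 + x3)))
        = arcF (a / b) := arc_opA a b _ ha hb
    have key : ∀ k, nArcticOp^[k + 2] (x1, x2, x3, u)
        = arcF (3 + (6/7)^k * (a / b - 3)) := by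
      intro k
      have : nArcticOp^[k + 2] (x1, x2, x3, u)
          = nArcticOp^[k] (nArcticOp (nArcticOp (x1, x2, x3, u))) := by
        rw [show k + 2 = k + 1 + 1 from rfl, Function.iterate_succ_apply,
          Function.iterate_succ_apply]
      rw [this, hstep1, hstep2, arc_iter k _ hr]
    have htend : Filter.Tendsto (fun k : ℕ => arcF (3 + (6/7)^k * (a / b - 3)))
        Filter.atTop (nhds (arcF 3)) :=
      arcF_cont.tendsto.comp (arc_tendsto (a / b))
    have hF3 : arcF 3 = ((7:ℝ)/20, (7:ℝ)/60, (7:ℝ)/60, (5:ℝ)/12) := by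
      simp only [arcF, Prod.mk.injEq]
      norm_num
    refine (Filter.tendsto_add_atTop_iff_nat 2).mp ?_
    simp only [key]
    rw [← hF3]
    exact htend
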